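/- Let ρ ∈ (0,1), θ ∈ (0,1], ϑ ∈ (0,1), β < ρ/4, and let Q be a dyadic cube with σ a measure. Suppose Q is partitioned (up to a set F₀) into disjoint cubes belonging to four families F_g^{(1)}, F_g^{(2)}, F_b^{(1)}, F_b^{(2)}, with σ(F₀) < ε σ(Q), σ(∪_{F_g^{(1)}} Q_j) < ε σ(Q), and suppose F ⊂ Q satisfies σ(F) ≥ (1−ϑβ)θσ(Q), σ(F∩Q_j) ≤ (1−4ϑβρ^{-1})θσ(Q_j) for Q_j ∈ F_g^{(2)}, σ(F∩Q_j) ≤ θσ(Q_j) for Q_j ∈ F_b^{(2)}, and σ(∪_{F_g^{(2)}}Q_j) ≥ (ρ/2)σ(Q). Then, provided ε ≤ (4C)^{-1}ϑβθ for a suitable dimensional constant C, one has Σ_{Q_j ∈ F_b^{(1)}} σ(Q_j) ≥ (1/4)ϑβθ σ(Q). -/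

import Mathlib

open Set MeasureTheory ENNReal

noncomputable section

/-- Measure-theoretic bookkeeping lemma (Claim 3.70 of Hofmann–Martell).  `Q` is partitioned,
up to a set `F₀ = Q \ ∪ Q_j` of measure `< ε μ(Q)`, into pairwise disjoint subsets `Q_j`
labelled by four families (label 0 = F_good^{(1)}, 1 = F_good^{(2)}, 2 = F_bad^{(1)},
3 = F_bad^{(2)}).  Under the stated density hypotheses on `F ⊆ Q`, and provided
`ε ≤ ϑβθ/(4C)` for a suitable universal constant `C`, the family `F_bad^{(1)}` is ample:
`Σ_{lab = 2} μ(Q_j) ≥ (1/4) ϑβθ μ(Q)`. -/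
theorem bookkeeping_ample_bad_family :
    ∃ C : ℝ, 0 < C ∧
      ∀ {X : Type} [mX : MeasurableSpace X] (μ : Measure X)
        (ρ θ ϑ β ε : ℝ),
        0 < ρ → ρ < 1 → 0 < θ → θ ≤ 1 → 0 < ϑ → ϑ < 1 → 0 < β → β < ρ / 4 →
        0 < ε → ε ≤ ϑ * β * θ / (4 * C) →
        ∀ (Q : Set X), MeasurableSet Q → μ Q ≠ ⊤ →
        ∀ (ι : Type) (_ : Countable ι) (Qj : ι → Set X) (lab : ι → Fin 4),
          (∀ i, MeasurableSet (Qj i)) → (∀ i, Qj i ⊆ Q) →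
          Pairwise (Function.onFun Disjoint Qj) →
          -- σ(F₀) < ε σ(Q)
          μ (Q \ ⋃ i, Qj i) < ENNReal.ofReal ε * μ Q →
          -- σ(∪_{F_good^{(1)}} Q_j) < ε σ(Q)
          μ (⋃ i ∈ {i | lab i = 0}, Qj i) < ENNReal.ofReal ε * μ Q →
          ∀ (F : Set X), MeasurableSet F → F ⊆ Q →
          -- σ(F) ≥ (1−ϑβ)θ σ(Q)
          ENNReal.ofReal ((1 - ϑ * β) * θ) * μ Q ≤ μ F →
          -- σ(F∩Q_j) ≤ (1−4ϑβρ⁻¹)θ σ(Q_j) on F_good^{(2)}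
          (∀ i, lab i = 1 → μ (F ∩ Qj i) ≤ ENNReal.ofReal ((1 - 4 * ϑ * β / ρ) * θ) * μ (Qj i)) →
          -- σ(F∩Q_j) ≤ θ σ(Q_j) on F_bad^{(2)}
          (∀ i, lab i = 3 → μ (F ∩ Qj i) ≤ ENNReal.ofReal θ * μ (Qj i)) →
          -- σ(∪_{F_good^{(2)}} Q_j) ≥ (ρ/2) σ(Q)
          ENNReal.ofReal (ρ / 2) * μ Q ≤ (∑' i : {i // lab i = 1}, μ (Qj i.1)) →
          ENNReal.ofReal (ϑ * β * θ / 4) * μ Q ≤ ∑' i : {i // lab i = 2}, μ (Qj i.1) := by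
  refine ⟨1, one_pos, ?_⟩
  intro X mX μ ρ θ ϑ β ε hρ hρ1 hθ hθ1 hϑ hϑ1 hβ hβρ hε hεle Q hQm hQfin ι hι Qj lab hQjm
    hQjsub hdisj hF0 hG1 F hFm hFQ hFlow hlab1 hlab3 hS1low
  haveI : Countable ι := hι
  -- real-number preliminaries
  have hβ1 : β < 1 / 4 := by linarith
  have hϑβ : ϑ * β < 1 := by nlinarith [mul_lt_mul_of_pos_left hβ1 hϑ]
  have ha0 : 0 ≤ (1 - ϑ * β) * θ := mul_nonneg (by linarith) hθ.le
  have hdρ : 4 * ϑ * β / ρ ≤ 1 := by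
    rw [div_le_one hρ]; nlinarith
  have hc10 : 0 ≤ (1 - 4 * ϑ * β / ρ) * θ := mul_nonneg (by linarith) hθ.le
  have hd0 : 0 ≤ 4 * ϑ * β * θ / ρ := by positivity
  have hcd : (1 - 4 * ϑ * β / ρ) * θ + 4 * ϑ * β * θ / ρ = θ := by
    field_simp; ring
  have hεb : ε ≤ ϑ * β * θ / 4 := by
    have := hεle; rw [show (4 : ℝ) * 1 = 4 by ring] at this; linarith
  -- notation for fiberwise sums
  set S : Fin 4 → ℝ≥0∞ := fun b => ∑' i : {i // lab i = b}, μ (Qj i.1) with hSdef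
  set T : Fin 4 → ℝ≥0∞ := fun b => ∑' i : {i // lab i = b}, μ (F ∩ Qj i.1) with hTdef
  -- disjointness on subtypes
  have hdisjS : ∀ b : Fin 4,
      Pairwise (Function.onFun Disjoint fun i : {i // lab i = b} => Qj i.1) := by
    intro b i j hij
    exact hdisj (Subtype.coe_injective.ne hij)
  have hdisjT : ∀ b : Fin 4,
      Pairwise (Function.onFun Disjoint fun i : {i // lab i = b} => F ∩ Qj i.1) := by
    intro b i j hij
    exact (hdisj (Subtype.coe_injective.ne hij)).mono inter_subset_right inter_subset_right
  -- total sum of μ (Qj i) is at most μ Q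
  have htotal : ∑' i, μ (Qj i) ≤ μ Q := by
    rw [← measure_iUnion hdisj hQjm]
    exact measure_mono (iUnion_subset hQjsub)
  -- fiberwise decomposition of tsums over ι
  have hfiber : ∀ f : ι → ℝ≥0∞,
      ∑' i, f i = (∑' i : {i // lab i = 0}, f i.1) + (∑' i : {i // lab i = 1}, f i.1)
        + (∑' i : {i // lab i = 2}, f i.1) + (∑' i : {i // lab i = 3}, f i.1) := by
    intro f
    rw [← ENNReal.tsum_fiberwise f lab, tsum_fintype, Fin.sum_univ_four]
    rfl
  -- each fiber sum is finite
  have hSle : ∀ b, S b ≤ μ Q := by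
    intro b
    refine le_trans ?_ htotal
    exact ENNReal.tsum_comp_le_tsum_of_injective Subtype.coe_injective (fun i => μ (Qj i))
  have hSfin : ∀ b, S b ≠ ⊤ := fun b => ((hSle b).trans_lt (lt_top_iff_ne_top.mpr hQfin)).ne
  -- Step A : μ F ≤ μ F₀ + ∑' μ (F ∩ Qj i)
  have hcover : F ⊆ (Q \ ⋃ i, Qj i) ∪ ⋃ i, (F ∩ Qj i) := by
    intro x hx
    by_cases hxU : x ∈ ⋃ i, Qj i
    · right
      obtain ⟨i, hi⟩ := mem_iUnion.mp hxU
      exact mem_iUnion.mpr ⟨i, hx, hi⟩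
    · exact Or.inl ⟨hFQ hx, hxU⟩
  have hA : μ F ≤ μ (Q \ ⋃ i, Qj i) + ∑' i, μ (F ∩ Qj i) :=
    (measure_mono hcover).trans ((measure_union_le _ _).trans
      (add_le_add (le_refl _) (measure_iUnion_le _)))
  -- label 0 bound
  have hT0 : T 0 ≤ ENNReal.ofReal ε * μ Q := by
    refine le_trans ?_ hG1.le
    have heq : T 0 = μ (⋃ i : {i // lab i = 0}, (F ∩ Qj i.1)) :=
      (measure_iUnion (hdisjT 0) (fun i => hFm.inter (hQjm _))).symm
    rw [heq]
    refine measure_mono (iUnion_subset fun i => ?_)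
    exact inter_subset_right.trans (subset_biUnion_of_mem i.2)
  -- label 1 bound
  have hT1 : T 1 ≤ ENNReal.ofReal ((1 - 4 * ϑ * β / ρ) * θ) * S 1 := by
    rw [hSdef, ← ENNReal.tsum_mul_left]
    exact ENNReal.tsum_le_tsum fun i => hlab1 i.1 i.2
  -- label 2 bound
  have hT2 : T 2 ≤ S 2 :=
    ENNReal.tsum_le_tsum fun i => measure_mono inter_subset_right
  -- label 3 bound
  have hT3 : T 3 ≤ ENNReal.ofReal θ * S 3 := by
    rw [hSdef, ← ENNReal.tsum_mul_left]
    exact ENNReal.tsum_le_tsum fun i => hlab3 i.1 i.2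
  -- S 1 + S 3 ≤ μ Q
  have hS13 : S 1 + S 3 ≤ μ Q := by
    refine le_trans ?_ htotal
    rw [hfiber (fun i => μ (Qj i))]
    calc S 1 + S 3 = 0 + S 1 + 0 + S 3 := by ring
      _ ≤ S 0 + S 1 + S 2 + S 3 := by gcongr <;> exact zero_le
  -- main chain
  have hmain : ENNReal.ofReal ((1 - ϑ * β) * θ) * μ Q + ENNReal.ofReal (4 * ϑ * β * θ / ρ) * S 1
      ≤ ENNReal.ofReal ε * μ Q + ENNReal.ofReal ε * μ Q + ENNReal.ofReal θ * μ Q + S 2 := by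
    calc ENNReal.ofReal ((1 - ϑ * β) * θ) * μ Q + ENNReal.ofReal (4 * ϑ * β * θ / ρ) * S 1
        ≤ μ F + ENNReal.ofReal (4 * ϑ * β * θ / ρ) * S 1 := by gcongr
      _ ≤ (μ (Q \ ⋃ i, Qj i) + ∑' i, μ (F ∩ Qj i))
            + ENNReal.ofReal (4 * ϑ * β * θ / ρ) * S 1 := by gcongr
      _ = μ (Q \ ⋃ i, Qj i) + (T 0 + T 1 + T 2 + T 3)
            + ENNReal.ofReal (4 * ϑ * β * θ / ρ) * S 1 := by
          rw [hfiber (fun i => μ (F ∩ Qj i))]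
      _ ≤ ENNReal.ofReal ε * μ Q
            + (ENNReal.ofReal ε * μ Q + ENNReal.ofReal ((1 - 4 * ϑ * β / ρ) * θ) * S 1
              + S 2 + ENNReal.ofReal θ * S 3)
            + ENNReal.ofReal (4 * ϑ * β * θ / ρ) * S 1 := by
          gcongr
      _ = ENNReal.ofReal ε * μ Q + ENNReal.ofReal ε * μ Q
            + (ENNReal.ofReal ((1 - 4 * ϑ * β / ρ) * θ) + ENNReal.ofReal (4 * ϑ * β * θ / ρ))
              * S 1 + ENNReal.ofReal θ * S 3 + S 2 := by ring
      _ = ENNReal.ofReal ε * μ Q + ENNReal.ofReal ε * μ Q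
            + ENNReal.ofReal θ * (S 1 + S 3) + S 2 := by
          rw [← ENNReal.ofReal_add hc10 hd0, hcd]; ring
      _ ≤ ENNReal.ofReal ε * μ Q + ENNReal.ofReal ε * μ Q + ENNReal.ofReal θ * μ Q + S 2 := by
          gcongr
  -- lower bound the S 1 term using hS1low
  have hlow : ENNReal.ofReal (2 * ϑ * β * θ) * μ Q
      ≤ ENNReal.ofReal (4 * ϑ * β * θ / ρ) * S 1 := by
    calc ENNReal.ofReal (2 * ϑ * β * θ) * μ Q
        = ENNReal.ofReal (4 * ϑ * β * θ / ρ) * (ENNReal.ofReal (ρ / 2) * μ Q) := by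
          rw [← mul_assoc, ← ENNReal.ofReal_mul hd0]
          congr 2
          field_simp
          ring
      _ ≤ ENNReal.ofReal (4 * ϑ * β * θ / ρ) * S 1 := by gcongr
  -- combine and cancel
  have hkey : ENNReal.ofReal ((1 - ϑ * β) * θ + 2 * ϑ * β * θ) * μ Q
      ≤ ENNReal.ofReal (ε + ε + θ) * μ Q + S 2 := by
    rw [ENNReal.ofReal_add ha0 (by positivity), ENNReal.ofReal_add (by positivity) hθ.le,
      ENNReal.ofReal_add hε.le hε.le]
    calc (ENNReal.ofReal ((1 - ϑ * β) * θ) + ENNReal.ofReal (2 * ϑ * β * θ)) * μ Q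
        = ENNReal.ofReal ((1 - ϑ * β) * θ) * μ Q + ENNReal.ofReal (2 * ϑ * β * θ) * μ Q := by
          ring
      _ ≤ ENNReal.ofReal ((1 - ϑ * β) * θ) * μ Q
            + ENNReal.ofReal (4 * ϑ * β * θ / ρ) * S 1 := by gcongr
      _ ≤ ENNReal.ofReal ε * μ Q + ENNReal.ofReal ε * μ Q + ENNReal.ofReal θ * μ Q + S 2 :=
          hmain
      _ = (ENNReal.ofReal ε + ENNReal.ofReal ε + ENNReal.ofReal θ) * μ Q + S 2 := by ring
  -- final cancellation
  have hfin : ENNReal.ofReal (ε + ε + θ) * μ Q ≠ ⊤ :=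
    ENNReal.mul_ne_top ENNReal.ofReal_ne_top hQfin
  have hsplit : ENNReal.ofReal (ε + ε + θ) * μ Q + ENNReal.ofReal (ϑ * β * θ / 4) * μ Q
      ≤ ENNReal.ofReal (ε + ε + θ) * μ Q + S 2 := by
    rw [← add_mul, ← ENNReal.ofReal_add (by positivity) (by positivity)]
    refine le_trans ?_ hkey
    refine mul_le_mul_left (ENNReal.ofReal_le_ofReal ?_) _
    nlinarith [mul_pos (mul_pos hϑ hβ) hθ]
  exact (ENNReal.add_le_add_iff_left hfin).mp hsplit
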